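/- arXiv:2307.07785 — 2 statements merged into one kernel-verified Lean document; each statement's English description precedes it below -/
import Mathlib

section
/- Let Θ ⊂ ℝ^d be compact, let R : Θ → ℝ and f_1,…,f_n : Θ → ℝ^m be continuous, let y_1,…,y_n ∈ ℝ^m, let ℓ : ℝ^m × ℝ^m → [0,∞) be continuous with ℓ(z,z') = 0 if and only if z = z', and suppose M = {θ ∈ Θ : f_i(θ) = y_i for all i} is nonempty. Define the augmented Lagrangian Λ(θ,γ,λ) = R(θ) + (1/γ) Σ_{i=1}^n ℓ(f_i(θ), y_i) + Σ_{i=1}^n λ_i · (f_i(θ) − y_i) for θ ∈ Θ, γ > 0, λ = (λ_i)_{i=1}^n ∈ ℝ^{n×m}, and the dual function Λ*(γ,λ) = inf_{θ ∈ Θ} Λ(θ,γ,λ). Then inf_{θ ∈ M} R(θ) = sup_{λ ∈ ℝ^{n×m}} sup_{γ ∈ (0,∞)} Λ*(γ,λ). -/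
open Finset

/-- Augmented Lagrangian (zero-duality-gap) duality for the constrained
interpolation problem: minimize `R(θ)` over `θ ∈ Θ` subject to `f i θ = y i` for all `i`,
with the loss `ℓ` used as augmenting function. -/
theorem augmented_lagrangian_duality
    (d m n : ℕ) (Θ : Set (EuclideanSpace ℝ (Fin d)))
    (hΘcompact : IsCompact Θ) (hΘne : Θ.Nonempty)
    (R : EuclideanSpace ℝ (Fin d) → ℝ) (hRcont : ContinuousOn R Θ)
    (f : Fin n → EuclideanSpace ℝ (Fin d) → EuclideanSpace ℝ (Fin m))
    (hfcont : ∀ i, ContinuousOn (f i) Θ)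
    (y : Fin n → EuclideanSpace ℝ (Fin m))
    (ℓ : EuclideanSpace ℝ (Fin m) → EuclideanSpace ℝ (Fin m) → ℝ)
    (hℓcont : Continuous fun p : EuclideanSpace ℝ (Fin m) × EuclideanSpace ℝ (Fin m) => ℓ p.1 p.2)
    (hℓnonneg : ∀ z z', 0 ≤ ℓ z z')
    (hℓzero : ∀ z z', ℓ z z' = 0 ↔ z = z')
    (M : Set (EuclideanSpace ℝ (Fin d)))
    (hM : M = {θ ∈ Θ | ∀ i, f i θ = y i})
    (hMne : M.Nonempty)
    (Λ : EuclideanSpace ℝ (Fin d) → ℝ → (Fin n → EuclideanSpace ℝ (Fin m)) → ℝ)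
    (hΛ : ∀ θ γ lam, Λ θ γ lam =
      R θ + (1 / γ) * ∑ i, ℓ (f i θ) (y i) +
        ∑ i, ∑ j, lam i j * (f i θ j - y i j))
    (Λstar : ℝ → (Fin n → EuclideanSpace ℝ (Fin m)) → ℝ)
    (hΛstar : ∀ γ lam, Λstar γ lam = sInf {r : ℝ | ∃ θ ∈ Θ, r = Λ θ γ lam}) :
    sInf {r : ℝ | ∃ θ ∈ M, r = R θ} =
      sSup {r : ℝ | ∃ lam : Fin n → EuclideanSpace ℝ (Fin m), ∃ γ : ℝ, 0 < γ ∧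
        r = Λstar γ lam} := by
  classical
  -- the penalty function
  set P : EuclideanSpace ℝ (Fin d) → ℝ := fun θ => ∑ i, ℓ (f i θ) (y i) with hPdef
  have hPcont : ContinuousOn P Θ := by
    apply continuousOn_finset_sum
    intro i _
    exact hℓcont.comp_continuousOn ((hfcont i).prodMk continuousOn_const)
  have hPnonneg : ∀ θ, 0 ≤ P θ := fun θ => Finset.sum_nonneg fun i _ => hℓnonneg _ _
  have hPzero : ∀ θ, P θ = 0 ↔ ∀ i, f i θ = y i := by
    intro θ
    rw [hPdef]
    rw [Finset.sum_eq_zero_iff_of_nonneg (fun i _ => hℓnonneg _ _)]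
    simp only [Finset.mem_univ, forall_true_left, hℓzero, true_implies]
  have hΘclosed : IsClosed Θ := hΘcompact.isClosed
  have hMΘ : M ⊆ Θ := by rw [hM]; exact fun θ h => h.1
  have hMeq : M = Θ ∩ P ⁻¹' {0} := by
    rw [hM]; ext θ
    simp only [Set.mem_setOf_eq, Set.mem_inter_iff, Set.mem_preimage, Set.mem_singleton_iff,
      hPzero θ]
  have hMcompact : IsCompact M := by
    refine hΘcompact.of_isClosed_subset ?_ hMΘ
    rw [hMeq]
    exact hPcont.preimage_isClosed_of_isClosed hΘclosed isClosed_singleton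
  obtain ⟨θs, hθsM, hθsmin⟩ := hMcompact.exists_isMinOn hMne (hRcont.mono hMΘ)
  set V := R θs with hVdef
  have hθsΘ : θs ∈ Θ := hMΘ hθsM
  have hθsf : ∀ i, f i θs = y i := by
    have := hθsM; rw [hM] at this; exact this.2
  -- LHS equals V
  have hLHS : sInf {r : ℝ | ∃ θ ∈ M, r = R θ} = V := by
    apply IsLeast.csInf_eq
    constructor
    · exact ⟨θs, hθsM, rfl⟩
    · rintro r ⟨θ, hθ, rfl⟩; exact hθsmin hθ
  rw [hLHS]
  -- Λ at θs equals V for any γ, lam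
  have hΛθs : ∀ γ lam, Λ θs γ lam = V := by
    intro γ lam
    rw [hΛ]
    have h1 : ∀ i : Fin n, ℓ (f i θs) (y i) = 0 := fun i => (hℓzero _ _).2 (hθsf i)
    have h2 : ∀ (i : Fin n) (j : Fin m), f i θs j - y i j = 0 := by
      intro i j; rw [hθsf i]; ring
    simp only [h1, Finset.sum_const_zero, mul_zero, add_zero, h2, Finset.sum_const_zero]
    rfl
  -- continuity of Λ in θ
  have hΛcont : ∀ γ lam, ContinuousOn (fun θ => Λ θ γ lam) Θ := by
    intro γ lam
    have : ContinuousOn (fun θ => R θ + (1 / γ) * P θ +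
        ∑ i, ∑ j, lam i j * (f i θ j - y i j)) Θ := by
      apply ContinuousOn.add
      · exact hRcont.add (continuousOn_const.mul hPcont)
      · apply continuousOn_finset_sum
        intro i _
        apply continuousOn_finset_sum
        intro j _
        exact continuousOn_const.mul
          (((PiLp.continuous_apply 2 _ j).comp_continuousOn (hfcont i)).sub continuousOn_const)
    refine this.congr fun θ _ => ?_
    rw [hΛ]
  -- boundedness below of dual inner sets
  have hbdd : ∀ γ lam, BddBelow {r : ℝ | ∃ θ ∈ Θ, r = Λ θ γ lam} := by
    intro γ lam
    have himg : {r : ℝ | ∃ θ ∈ Θ, r = Λ θ γ lam} = (fun θ => Λ θ γ lam) '' Θ := by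
      ext r; simp [Set.mem_image, eq_comm]
    rw [himg]
    exact (hΘcompact.image_of_continuousOn (hΛcont γ lam)).bddBelow
  have hne : ∀ γ lam, {r : ℝ | ∃ θ ∈ Θ, r = Λ θ γ lam}.Nonempty := by
    intro γ lam
    obtain ⟨θ, hθ⟩ := hΘne
    exact ⟨Λ θ γ lam, θ, hθ, rfl⟩
  -- dual values are at most V
  have hupper : ∀ (γ : ℝ) (lam : Fin n → EuclideanSpace ℝ (Fin m)), Λstar γ lam ≤ V := by
    intro γ lam
    rw [hΛstar]
    exact csInf_le (hbdd γ lam) ⟨θs, hθsΘ, (hΛθs γ lam).symm⟩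
  set S : Set ℝ := {r : ℝ | ∃ lam : Fin n → EuclideanSpace ℝ (Fin m), ∃ γ : ℝ, 0 < γ ∧
      r = Λstar γ lam} with hSdef
  have hSne : S.Nonempty := ⟨Λstar 1 0, 0, 1, one_pos, rfl⟩
  have hSbdd : BddAbove S := by
    refine ⟨V, ?_⟩
    rintro r ⟨lam, γ, hγ, rfl⟩
    exact hupper γ lam
  have hSle : sSup S ≤ V := by
    apply csSup_le hSne
    rintro r ⟨lam, γ, hγ, rfl⟩
    exact hupper γ lam
  -- penalty-type lower bound
  have hkey : ∀ ε : ℝ, 0 < ε → ∃ γ : ℝ, 0 < γ ∧ ∀ θ ∈ Θ, V - ε ≤ R θ + (1 / γ) * P θ := by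
    intro ε hε
    set K : Set (EuclideanSpace ℝ (Fin d)) := Θ ∩ R ⁻¹' (Set.Iic (V - ε)) with hKdef
    rcases K.eq_empty_or_nonempty with hKe | hKne
    · refine ⟨1, one_pos, fun θ hθ => ?_⟩
      have hθK : θ ∉ K := by rw [hKe]; exact Set.notMem_empty θ
      have : ¬ R θ ≤ V - ε := by
        intro h; exact hθK ⟨hθ, h⟩
      have h1 : V - ε ≤ R θ := le_of_not_ge this
      have := hPnonneg θ
      nlinarith
    · have hKcompact : IsCompact K :=
        hΘcompact.of_isClosed_subset
          (hRcont.preimage_isClosed_of_isClosed hΘclosed isClosed_Iic)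
          Set.inter_subset_left
      have hKΘ : K ⊆ Θ := Set.inter_subset_left
      obtain ⟨θ₀, hθ₀K, hθ₀min⟩ := hKcompact.exists_isMinOn hKne (hPcont.mono hKΘ)
      set p := P θ₀ with hpdef
      have hp : 0 < p := by
        rcases lt_or_eq_of_le (hPnonneg θ₀) with h | h
        · exact h
        · exfalso
          have hθ₀M : θ₀ ∈ M := by
            rw [hM]
            exact ⟨hKΘ hθ₀K, (hPzero θ₀).1 h.symm⟩
          have h1 : V ≤ R θ₀ := hθsmin hθ₀M
          have h2 : R θ₀ ≤ V - ε := hθ₀K.2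
          linarith
      obtain ⟨θB, hθBΘ, hθBmin⟩ := hΘcompact.exists_isMinOn hΘne hRcont
      set B := R θB with hBdef
      have hBV : B ≤ V := hθBmin hθsΘ
      refine ⟨p / (V - B + 1), div_pos hp (by linarith), fun θ hθ => ?_⟩
      have hinv : 1 / (p / (V - B + 1)) = (V - B + 1) / p := one_div_div _ _
      by_cases hcase : R θ ≤ V - ε
      · have hθK : θ ∈ K := ⟨hθ, hcase⟩
        have hPθ : p ≤ P θ := hθ₀min hθK
        have hBθ : B ≤ R θ := hθBmin hθ
        have hmul : (V - B + 1) / p * p ≤ (V - B + 1) / p * P θ := by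
          apply mul_le_mul_of_nonneg_left hPθ
          exact div_nonneg (by linarith) hp.le
        have heq : (V - B + 1) / p * p = V - B + 1 := div_mul_cancel₀ _ (ne_of_gt hp)
        rw [hinv]
        nlinarith
      · have h1 : V - ε ≤ R θ := le_of_not_ge hcase
        have h2 : 0 ≤ (1 / (p / (V - B + 1))) * P θ := by
          apply mul_nonneg _ (hPnonneg θ)
          rw [hinv]; exact div_nonneg (by linarith) hp.le
        linarith
  -- V ≤ sSup S
  have hge : V ≤ sSup S := by
    refine le_of_forall_pos_le_add fun ε hε => ?_
    obtain ⟨γ, hγ, hγbound⟩ := hkey ε hε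
    have hΛ0 : ∀ θ, Λ θ γ 0 = R θ + (1 / γ) * P θ := by
      intro θ
      rw [hΛ]
      have : ∀ (i : Fin n) (j : Fin m), (0 : Fin n → EuclideanSpace ℝ (Fin m)) i j *
          (f i θ j - y i j) = 0 := by
        intro i j
        simp
      simp only [this, Finset.sum_const_zero, add_zero]
      rfl
    have hΛstar0 : V - ε ≤ Λstar γ 0 := by
      rw [hΛstar]
      apply le_csInf (hne γ 0)
      rintro r ⟨θ, hθ, rfl⟩
      rw [hΛ0]
      exact hγbound θ hθ
    have hmem : Λstar γ 0 ∈ S := ⟨0, γ, hγ, rfl⟩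
    have := le_csSup hSbdd hmem
    linarith
  linarith
end

section
/- Let π be a continuous probability density on ℝ^d with a unique global maximizer θ₀, with π(θ) → 0 as ‖θ‖ → ∞, and such that −log π(θ) ≤ M‖θ‖^p for all θ ∈ ℝ^d, for some constants M, p > 0. For τ ∈ (0,1] let π_τ(θ) = π(θ)^{1/τ} / ∫_{ℝ^d} π(θ')^{1/τ} dθ'. Then there exist a compact set K ⊂ ℝ^d containing θ₀ and a function r : (0,1] → [0,∞) such that r(τ)/τ^k → 0 as τ → 0⁺ for every k ∈ ℕ, and π_τ(θ) ≤ r(τ) π(θ) for all θ ∉ K and all τ ∈ (0,1]. -/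
open MeasureTheory Filter

/-- Auxiliary: `x^k * exp (-b*x) → 0` at `atTop` for `b > 0`. -/
lemma aux_pow_mul_exp_neg_mul (k : ℕ) (b : ℝ) (hb : 0 < b) :
    Tendsto (fun x : ℝ => x ^ k * Real.exp (-(b * x))) atTop (nhds 0) := by
  have h1 : Tendsto (fun x : ℝ => b * x) atTop atTop :=
    Filter.tendsto_id.const_mul_atTop hb
  have h2 := (Real.tendsto_pow_mul_exp_neg_atTop_nhds_zero k).comp h1
  have h3 : Tendsto (fun x : ℝ => (b * x) ^ k * Real.exp (-(b * x)) / b ^ k)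
      atTop (nhds 0) := by
    have := h2.div_const ((b : ℝ) ^ k)
    simpa using this
  refine h3.congr' ?_
  filter_upwards [eventually_gt_atTop 0] with x hx
  have hbk : (b : ℝ) ^ k ≠ 0 := by positivity
  field_simp
  ring

/-- Super-polynomial concentration of the tempered prior family
`π_τ ∝ π^{1/τ}` onto a compact neighborhood of its mode as `τ → 0⁺`. -/
theorem tempered_prior_concentration
    (d : ℕ) (π : EuclideanSpace ℝ (Fin d) → ℝ)
    (hπcont : Continuous π) (hπnonneg : ∀ θ, 0 ≤ π θ)
    (hπprob : ∫ θ, π θ = 1)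
    (θ0 : EuclideanSpace ℝ (Fin d))
    (hmode : ∀ θ, θ ≠ θ0 → π θ < π θ0)
    (hdecay : Tendsto π (cocompact (EuclideanSpace ℝ (Fin d))) (nhds 0))
    (M p : ℝ) (hMpos : 0 < M) (hppos : 0 < p)
    (hlower : ∀ θ, Real.exp (-(M * ‖θ‖ ^ p)) ≤ π θ)
    (πτ : ℝ → EuclideanSpace ℝ (Fin d) → ℝ)
    (hπτ : ∀ τ θ, πτ τ θ = π θ ^ (1 / τ) / ∫ θ', π θ' ^ (1 / τ)) :
    ∃ K : Set (EuclideanSpace ℝ (Fin d)), IsCompact K ∧ θ0 ∈ K ∧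
      ∃ r : ℝ → ℝ, (∀ τ ∈ Set.Ioc (0 : ℝ) 1, 0 ≤ r τ) ∧
        (∀ k : ℕ, Tendsto (fun τ => r τ / τ ^ k) (nhdsWithin 0 (Set.Ioi 0)) (nhds 0)) ∧
        ∀ θ ∉ K, ∀ τ ∈ Set.Ioc (0 : ℝ) 1, πτ τ θ ≤ r τ * π θ := by
  -- positivity of π everywhere
  have hπpos : ∀ θ, 0 < π θ := fun θ => lt_of_lt_of_le (Real.exp_pos _) (hlower θ)
  set B := π θ0 with hBdef
  have hB : 0 < B := hπpos θ0
  have hle : ∀ θ, π θ ≤ B := by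
    intro θ
    by_cases h : θ = θ0
    · simp [h, hBdef]
    · exact (hmode θ h).le
  set c : ℝ := B / 2 with hcdef
  set c' : ℝ := 3 * B / 4 with hc'def
  have hc : 0 < c := by positivity
  have hc' : 0 < c' := by positivity
  have hcc' : c < c' := by rw [hcdef, hc'def]; linarith
  have hc'B : c' < B := by rw [hc'def]; linarith
  -- ball around θ0 where π > c'
  have hopen : IsOpen {θ : EuclideanSpace ℝ (Fin d) | c' < π θ} :=
    isOpen_lt continuous_const hπcont
  obtain ⟨ε, hε, hball⟩ := Metric.isOpen_iff.1 hopen θ0 (by simpa using hc'B)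
  -- K
  refine ⟨{θ | c ≤ π θ}, ?_, ?_, ?_⟩
  · -- compactness
    have hclosed : IsClosed {θ : EuclideanSpace ℝ (Fin d) | c ≤ π θ} :=
      isClosed_le continuous_const hπcont
    have hev : ∀ᶠ θ in cocompact (EuclideanSpace ℝ (Fin d)), π θ < c :=
      hdecay.eventually (Filter.Tendsto.eventually_lt_const hc tendsto_id)
    obtain ⟨t, htc, hts⟩ := hasBasis_cocompact.eventually_iff.1 hev
    refine htc.of_isClosed_subset hclosed ?_
    intro θ hθ
    by_contra h
    exact absurd (hts h) (not_lt.2 hθ)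
  · -- θ0 ∈ K
    show c ≤ π θ0
    rw [hcdef]; linarith
  · -- the rate function
    set V : ℝ := (volume (Metric.ball θ0 ε)).toReal with hVdef
    have hV : 0 < V := by
      rw [hVdef]
      refine ENNReal.toReal_pos ?_ measure_ball_lt_top.ne
      exact (Metric.measure_ball_pos volume θ0 hε).ne'
    refine ⟨fun τ => (c / c') ^ (1 / τ) / (c * V), ?_, ?_, ?_⟩
    · intro τ _
      positivity
    · -- superpolynomial decay
      intro k
      have hq : 0 < c / c' := by positivity
      have hq1 : c / c' < 1 := (div_lt_one hc').2 hcc'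
      have hb : 0 < -Real.log (c / c') := by
        have := Real.log_neg hq hq1
        linarith
      have hmain : Tendsto (fun x : ℝ => (c / c') ^ x * x ^ k) atTop (nhds 0) := by
        have := aux_pow_mul_exp_neg_mul k (-Real.log (c / c')) hb
        refine this.congr' ?_
        filter_upwards [eventually_gt_atTop 0] with x hx
        rw [Real.rpow_def_of_pos hq]
        ring_nf
      have hcomp := hmain.comp (tendsto_inv_nhdsGT_zero (𝕜 := ℝ))
      have hfin := hcomp.div_const (c * V)
      rw [zero_div] at hfin
      refine hfin.congr' ?_
      filter_upwards [self_mem_nhdsWithin] with τ (hτ : 0 < τ)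
      show (c / c') ^ τ⁻¹ * (τ⁻¹) ^ k / (c * V) = (c / c') ^ (1 / τ) / (c * V) / τ ^ k
      rw [one_div, inv_pow]
      field_simp
    · -- the main inequality
      intro θ hθK τ hτ
      obtain ⟨hτ0, hτ1⟩ := hτ
      set t : ℝ := 1 / τ with htdef
      have ht1 : 1 ≤ t := by
        rw [htdef]
        exact one_le_one_div hτ0 hτ1
      have ht0 : 0 < t := lt_of_lt_of_le one_pos ht1
      have hπθc : π θ < c := not_le.1 hθK
      -- integrability of π
      have hπint : Integrable π := by
        by_contra h
        rw [integral_undef h] at hπprob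
        norm_num at hπprob
      -- integrability of π^t
      have hcontt : Continuous fun θ' => π θ' ^ t :=
        hπcont.rpow_const fun θ' => Or.inr ht0.le
      have hboundt : ∀ θ', π θ' ^ t ≤ B ^ (t - 1) * π θ' := by
        intro θ'
        have h1 : π θ' ^ t = π θ' ^ (t - 1) * π θ' := by
          rw [← Real.rpow_add_one (hπpos θ').ne']
          ring_nf
        rw [h1]
        exact mul_le_mul_of_nonneg_right
          (Real.rpow_le_rpow (hπnonneg θ') (hle θ') (by linarith))
          (hπnonneg θ')
      have hintt : Integrable fun θ' => π θ' ^ t := by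
        refine (hπint.const_mul (B ^ (t - 1))).mono hcontt.aestronglyMeasurable ?_
        refine Eventually.of_forall fun θ' => ?_
        rw [Real.norm_eq_abs, Real.norm_eq_abs,
          abs_of_nonneg (Real.rpow_nonneg (hπnonneg θ') t),
          abs_of_nonneg (mul_nonneg (Real.rpow_nonneg hB.le _) (hπnonneg θ'))]
        exact hboundt θ'
      -- lower bound on partition function
      set Z : ℝ := ∫ θ', π θ' ^ t with hZdef
      have hmeasball : MeasurableSet (Metric.ball θ0 ε) := measurableSet_ball
      have hZlow : V * c' ^ t ≤ Z := by
        have hgint : Integrable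
            ((Metric.ball θ0 ε).indicator fun _ => c' ^ t) := by
          refine (integrable_indicator_iff hmeasball).2 ?_
          exact integrableOn_const measure_ball_lt_top.ne
        have hgle : ∀ θ', (Metric.ball θ0 ε).indicator (fun _ => c' ^ t) θ' ≤ π θ' ^ t := by
          intro θ'
          by_cases h : θ' ∈ Metric.ball θ0 ε
          · rw [Set.indicator_of_mem h]
            exact Real.rpow_le_rpow hc'.le (hball h).le ht0.le
          · rw [Set.indicator_of_notMem h]
            exact Real.rpow_nonneg (hπnonneg θ') t
        have := integral_mono hgint hintt hgle
        rwa [integral_indicator_const _ hmeasball, smul_eq_mul, measureReal_def, ← hVdef] at this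
      have hZpos : 0 < Z := lt_of_lt_of_le (by positivity) hZlow
      -- pointwise bound
      have hnum : π θ ^ t ≤ c ^ (t - 1) * π θ := by
        have h1 : π θ ^ t = π θ ^ (t - 1) * π θ := by
          rw [← Real.rpow_add_one (hπpos θ).ne']
          ring_nf
        rw [h1]
        exact mul_le_mul_of_nonneg_right
          (Real.rpow_le_rpow (hπnonneg θ) hπθc.le (by linarith))
          (hπnonneg θ)
      rw [hπτ, ← htdef, ← hZdef]
      have hVc' : 0 < V * c' ^ t := mul_pos hV (Real.rpow_pos_of_pos hc' t)
      have hnn : 0 ≤ c ^ (t - 1) * π θ :=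
        mul_nonneg (Real.rpow_nonneg hc.le _) (hπnonneg θ)
      calc π θ ^ t / Z ≤ c ^ (t - 1) * π θ / Z := (div_le_div_iff_of_pos_right hZpos).2 hnum
        _ ≤ c ^ (t - 1) * π θ / (V * c' ^ t) :=
            div_le_div_of_nonneg_left hnn hVc' hZlow
        _ = (c / c') ^ t / (c * V) * π θ := by
            rw [Real.div_rpow hc.le hc'.le, Real.rpow_sub hc, Real.rpow_one]
            have h2 : c' ^ t ≠ 0 := (Real.rpow_pos_of_pos hc' t).ne'
            field_simp
end
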